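/- Let w be an ultimately periodic infinite word with period u of length p, and let π be an accepting run of a finite-state deterministic weighted automaton on w with limit-average value v. If a state q occurs at two positions i < j within one period with equal partial behavior, then removing the segment between i and j from every period yields a word whose limit-average run value does not increase, provided the average weight of the removed cycle is at least v. -/

import Mathlib

open Finset

/-- Cycle removal: if a period of length `p` with weights `d` contains a cycle
(segment `[i, j)`) whose average weight is at least the period average, then the
period with the cycle removed has average at most the period average. -/
theorem cycle_removal (d : ℕ → ℝ) (p i j : ℕ)
    (hij : i < j) (hjp : j ≤ p) (hlt : j - i < p)
    (hc : (∑ t ∈ Finset.range p, d t) / (p : ℝ) ≤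
      (∑ t ∈ Finset.Ico i j, d t) / ((j : ℝ) - (i : ℝ))) :
    ((∑ t ∈ Finset.range p, d t) - ∑ t ∈ Finset.Ico i j, d t) /
        ((p : ℝ) - ((j : ℝ) - (i : ℝ))) ≤
      (∑ t ∈ Finset.range p, d t) / (p : ℝ) := by
  set S := ∑ t ∈ Finset.range p, d t
  set C := ∑ t ∈ Finset.Ico i j, d t
  have hk : (0 : ℝ) < (j : ℝ) - (i : ℝ) := by
    have : (i : ℝ) < (j : ℝ) := by exact_mod_cast hij
    linarith
  have hp : (0 : ℝ) < (p : ℝ) := by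
    have : 0 < p := lt_of_le_of_lt (Nat.zero_le _) (lt_of_lt_of_le hij hjp)
    exact_mod_cast this
  have hpk : (0 : ℝ) < (p : ℝ) - ((j : ℝ) - (i : ℝ)) := by
    have h1 : ((j - i : ℕ) : ℝ) < (p : ℝ) := by exact_mod_cast hlt
    have h2 : ((j - i : ℕ) : ℝ) = (j : ℝ) - (i : ℝ) := by
      push_cast [Nat.cast_sub hij.le]; ring
    linarith
  rw [div_le_div_iff₀ hpk hp]
  rw [div_le_div_iff₀ hp hk] at hc
  nlinarith
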